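/- Let μ, K, C ∈ ℝ, σ > 0, h > 0, and Y ~ N(μ, σ²). Define Ψ_h(y) = (y − K)·Csinc((y − C)/(σh)) − (σ/h)·sinc((y − C)/(σh)). Then E[Ψ_h(Y)] = (1/2)(μ − K) + ((μ − K)/π) ∫₀^{1/h} ω^{−1} e^{−ω²/2} sin(ω(μ − C)/σ) dω. -/

import Mathlib

open MeasureTheory ProbabilityTheory Real Filter
open scoped NNReal ENNReal

section GaussHelpers

variable {v : ℝ}

private lemma int_E (hv : 0 < v) (m : ℝ) :
    Integrable fun x : ℝ => rexp (-(x - m)^2 / (2*v)) := by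
  have h : (fun x : ℝ => rexp (-(x - m)^2 / (2*v)))
      = (fun x : ℝ => rexp (-(1/(2*v)) * x^2)) ∘ (fun x => x - m) := by
    funext x; simp only [Function.comp_apply]; congr 1; field_simp
  rw [h]
  exact (integrable_exp_neg_mul_sq (by positivity)).comp_sub_right m

private lemma int_sq_exp {b : ℝ} (hb : 0 < b) :
    Integrable fun x : ℝ => x^2 * rexp (-b * x^2) := by
  refine Integrable.mono' (((integrable_exp_neg_mul_sq (show (0:ℝ) < b/2 by positivity)).const_mul (2/b)))
    (by apply Measurable.aestronglyMeasurable; measurability) (Filter.Eventually.of_forall fun x => ?_)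
  have h1 : (b/2) * x^2 ≤ rexp ((b/2) * x^2) := by
    have := Real.add_one_le_exp ((b/2) * x^2)
    nlinarith [Real.exp_pos ((b/2)*x^2)]
  have h2 : x^2 ≤ (2/b) * rexp ((b/2) * x^2) := by
    rw [div_mul_eq_mul_div, le_div_iff₀ hb]
    nlinarith
  rw [Real.norm_eq_abs, abs_mul, _root_.abs_of_nonneg (sq_nonneg x),
    _root_.abs_of_nonneg (Real.exp_pos _).le]
  calc x ^ 2 * rexp (-b * x ^ 2) ≤ (2/b) * rexp ((b/2) * x^2) * rexp (-b * x^2) := by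
        apply mul_le_mul_of_nonneg_right h2 (Real.exp_pos _).le
    _ = 2/b * rexp (-(b/2) * x^2) := by rw [mul_assoc, ← Real.exp_add]; ring_nf

private lemma int_sq_E (hv : 0 < v) (m : ℝ) :
    Integrable fun x : ℝ => (x - m)^2 * rexp (-(x - m)^2 / (2*v)) := by
  have h : (fun x : ℝ => (x - m)^2 * rexp (-(x - m)^2 / (2*v)))
      = (fun x : ℝ => x^2 * rexp (-(1/(2*v)) * x^2)) ∘ (fun x => x - m) := by
    funext x; simp only [Function.comp_apply]; congr 2; field_simp
  rw [h]
  exact (int_sq_exp (by positivity)).comp_sub_right m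

private lemma int_x_E (hv : 0 < v) (m : ℝ) :
    Integrable fun x : ℝ => x * rexp (-(x - m)^2 / (2*v)) := by
  have h : (fun x : ℝ => x * rexp (-(x - m)^2 / (2*v)))
      = fun x : ℝ => ((fun y : ℝ => y * rexp (-(1/(2*v)) * y^2)) ∘ (fun x => x - m)) x
        + m * rexp (-(x - m)^2 / (2*v)) := by
    funext x; simp only [Function.comp_apply]
    have : -(1/(2*v)) * (x - m)^2 = -(x - m)^2/(2*v) := by field_simp
    rw [this]; ring
  rw [h]
  exact (((integrable_mul_exp_neg_mul_sq (show (0:ℝ) < 1/(2*v) by positivity)).comp_sub_right m)).add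
    ((int_E hv m).const_mul m)

private lemma int_cos_E (hv : 0 < v) (m a b : ℝ) :
    Integrable fun x : ℝ => Real.cos (a*x+b) * rexp (-(x - m)^2 / (2*v)) :=
  (int_E hv m).bdd_mul (Continuous.aestronglyMeasurable (by continuity)) (c := 1) (Filter.Eventually.of_forall fun x => by
    rw [Real.norm_eq_abs]; exact Real.abs_cos_le_one _)

private lemma int_sin_E (hv : 0 < v) (m a b : ℝ) :
    Integrable fun x : ℝ => Real.sin (a*x+b) * rexp (-(x - m)^2 / (2*v)) :=
  (int_E hv m).bdd_mul (Continuous.aestronglyMeasurable (by continuity)) (c := 1) (Filter.Eventually.of_forall fun x => by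
    rw [Real.norm_eq_abs]; exact Real.abs_sin_le_one _)

private lemma gauss_trig (hv : 0 < v) (m a b : ℝ) :
    (∫ x : ℝ, Real.cos (a*x+b) * rexp (-(x - m)^2/(2*v)))
        = Real.sqrt (2*π*v) * (rexp (-(a^2*v)/2) * Real.cos (a*m+b))
    ∧ (∫ x : ℝ, Real.sin (a*x+b) * rexp (-(x - m)^2/(2*v)))
        = Real.sqrt (2*π*v) * (rexp (-(a^2*v)/2) * Real.sin (a*m+b)) := by
  have hv' : (v:ℂ) ≠ 0 := Complex.ofReal_ne_zero.mpr hv.ne'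
  have key := integral_cexp_quadratic (b := (-(1/(2*v)) : ℂ))
    (by simp; positivity) (Complex.I*a + m/v) (Complex.I*b - m^2/(2*v))
  have h2 : ∀ x : ℝ, Complex.exp ((-(1/(2*v)) : ℂ) * x^2 + (Complex.I*a + m/v) * x + (Complex.I*b - m^2/(2*v)))
      = (↑(Real.cos (a*x+b) * rexp (-(x - m)^2/(2*v))) : ℂ)
        + (↑(Real.sin (a*x+b) * rexp (-(x - m)^2/(2*v))) : ℂ) * Complex.I := by
    intro x
    have h1 : (-(1/(2*v)) : ℂ) * x^2 + (Complex.I*a + m/v) * x + (Complex.I*b - m^2/(2*v))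
        = ((a*x+b : ℝ) : ℂ) * Complex.I + ((-(x - m)^2/(2*v) : ℝ) : ℂ) := by
      push_cast; field_simp; ring
    rw [h1, Complex.exp_add, Complex.exp_mul_I, ← Complex.ofReal_cos, ← Complex.ofReal_sin,
      ← Complex.ofReal_exp]
    push_cast; ring
  simp_rw [h2] at key
  have hf' : Integrable fun x : ℝ => ((Real.cos (a*x+b) * rexp (-(x - m)^2/(2*v)) : ℝ) : ℂ) :=
    (int_cos_E hv m a b).ofReal
  have hg' : Integrable fun x : ℝ => ((Real.sin (a*x+b) * rexp (-(x - m)^2/(2*v)) : ℝ) : ℂ) * Complex.I :=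
    ((int_sin_E hv m a b).ofReal).mul_const _
  have e1 : (∫ x : ℝ, ((Real.cos (a*x+b) * rexp (-(x - m)^2/(2*v)) : ℝ) : ℂ))
      = ((∫ x : ℝ, Real.cos (a*x+b) * rexp (-(x - m)^2/(2*v)) : ℝ) : ℂ) := integral_ofReal
  have e2 : (∫ x : ℝ, ((Real.sin (a*x+b) * rexp (-(x - m)^2/(2*v)) : ℝ) : ℂ))
      = ((∫ x : ℝ, Real.sin (a*x+b) * rexp (-(x - m)^2/(2*v)) : ℝ) : ℂ) := integral_ofReal
  rw [integral_add hf' hg', integral_mul_const, e1, e2] at key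
  have hbase : (↑π / - -(1 / (2 * (v:ℂ)))) = ((2*π*v : ℝ) : ℂ) := by
    push_cast; field_simp
  have hpow : ((2*π*v : ℝ) : ℂ) ^ (1/2 : ℂ) = ((Real.sqrt (2*π*v) : ℝ) : ℂ) := by
    rw [show ((1:ℂ)/2) = ((1/2 : ℝ) : ℂ) by norm_num, ← Complex.ofReal_cpow (by positivity),
      ← Real.sqrt_eq_rpow]
  have hc2 : ((Complex.I*a + m/v))^2 = -a^2 + 2*Complex.I*a*m/v + m^2/v^2 := by
    linear_combination ((a:ℂ))^2 * Complex.I_sq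
  have hexp : (Complex.I*(b:ℂ) - m^2/(2*v) - (Complex.I*a + m/v)^2/(4 * (-(1/(2*v)))))
      = ((-(a^2*v)/2 : ℝ) : ℂ) + ((a*m+b : ℝ) : ℂ) * Complex.I := by
    rw [hc2]; push_cast; field_simp [hv']; ring
  rw [hbase, hpow, hexp, Complex.exp_add, Complex.exp_mul_I, ← Complex.ofReal_cos,
    ← Complex.ofReal_sin, ← Complex.ofReal_exp] at key
  have key2 : (↑(∫ x : ℝ, Real.cos (a*x+b) * rexp (-(x - m)^2/(2*v))) : ℂ)
      + (↑(∫ x : ℝ, Real.sin (a*x+b) * rexp (-(x - m)^2/(2*v))) : ℂ) * Complex.I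
      = ↑(Real.sqrt (2*π*v) * (rexp (-(a^2*v)/2) * Real.cos (a*m+b)))
      + ↑(Real.sqrt (2*π*v) * (rexp (-(a^2*v)/2) * Real.sin (a*m+b))) * Complex.I := by
    rw [key]; push_cast [-Complex.ofReal_cos, -Complex.ofReal_sin, -Complex.ofReal_exp]; ring
  have h1 := congrArg Complex.re key2
  have h2' := congrArg Complex.im key2
  simp only [Complex.add_re, Complex.add_im, Complex.mul_re, Complex.mul_im, Complex.I_re,
    Complex.I_im, Complex.ofReal_re, Complex.ofReal_im, mul_zero, mul_one, zero_mul, sub_zero,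
    zero_add, add_zero, zero_sub, neg_zero, neg_neg] at h1 h2'
  exact ⟨h1, h2'⟩

private lemma int_xm_E (hv : 0 < v) (m : ℝ) :
    Integrable fun x : ℝ => (x - m) * rexp (-(x - m)^2 / (2*v)) := by
  have h : (fun x : ℝ => (x - m) * rexp (-(x - m)^2 / (2*v)))
      = (fun x : ℝ => x * rexp (-(1/(2*v)) * x^2)) ∘ (fun x => x - m) := by
    funext x; simp only [Function.comp_apply]; congr 2; field_simp
  rw [h]
  exact (integrable_mul_exp_neg_mul_sq (by positivity)).comp_sub_right m

private lemma tendsto_E_atTop (hv : 0 < v) (m : ℝ) :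
    Tendsto (fun x : ℝ => rexp (-(x - m)^2 / (2*v))) atTop (nhds 0) := by
  apply Real.tendsto_exp_atBot.comp
  have h0 : Tendsto (fun x : ℝ => x - m) atTop atTop := by
    simpa [sub_eq_add_neg] using tendsto_atTop_add_const_right atTop (-m) tendsto_id
  have h1 : Tendsto (fun x : ℝ => (x - m)^2) atTop atTop :=
    (tendsto_pow_atTop two_ne_zero).comp h0
  have h2 := h1.atTop_div_const (show (0:ℝ) < 2*v by positivity)
  have h3 := tendsto_neg_atTop_atBot.comp h2
  simpa [Function.comp_def, neg_div] using h3

private lemma tendsto_E_atBot (hv : 0 < v) (m : ℝ) :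
    Tendsto (fun x : ℝ => rexp (-(x - m)^2 / (2*v))) atBot (nhds 0) := by
  apply Real.tendsto_exp_atBot.comp
  have h0 : Tendsto (fun x : ℝ => x - m) atBot atBot := by
    simpa [sub_eq_add_neg] using tendsto_atBot_add_const_right atBot (-m) tendsto_id
  have h1 : Tendsto (fun x : ℝ => (x - m)^2) atBot atTop := by
    have := (tendsto_pow_atTop two_ne_zero).comp (tendsto_abs_atBot_atTop.comp h0)
    simpa [Function.comp_def, sq_abs] using this
  have h2 := h1.atTop_div_const (show (0:ℝ) < 2*v by positivity)
  have h3 := tendsto_neg_atTop_atBot.comp h2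
  simpa [Function.comp_def, neg_div] using h3

private lemma gauss_xsin (hv : 0 < v) (m a b : ℝ) :
    (∫ x : ℝ, x * Real.sin (a*x+b) * rexp (-(x - m)^2/(2*v)))
      = Real.sqrt (2*π*v) * (rexp (-(a^2*v)/2)
          * (m * Real.sin (a*m+b) + a*v*Real.cos (a*m+b))) := by
  set u := fun x : ℝ => Real.sin (a*x+b) with hu_def
  set u' := fun x : ℝ => a * Real.cos (a*x+b) with hu'_def
  set w := fun x : ℝ => -v * rexp (-(x - m)^2 / (2*v)) with hw_def
  set w' := fun x : ℝ => (x - m) * rexp (-(x - m)^2 / (2*v)) with hw'_def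
  have hu : ∀ x, HasDerivAt u (u' x) x := by
    intro x
    have h := ((hasDerivAt_id x).const_mul a).add_const b
    simpa [hu'_def, mul_comm] using h.sin
  have hw : ∀ x, HasDerivAt w (w' x) x := by
    intro x
    have hg : HasDerivAt (fun x : ℝ => -(x - m)^2/(2*v)) (-(2*(x-m))/(2*v)) x := by
      have h1 := ((hasDerivAt_id x).sub_const m).pow 2
      simpa using (h1.neg.div_const (2*v))
    have h2 := (hg.exp.const_mul (-v))
    convert h2 using 1
    · rfl
    · rfl
    simp only [hw'_def]
    field_simp
  have h_int1 : Integrable (u * w') :=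
    (int_xm_E hv m).bdd_mul (Continuous.aestronglyMeasurable (by continuity))
      (c := 1) (Filter.Eventually.of_forall fun x => by rw [Real.norm_eq_abs]; exact Real.abs_sin_le_one _)
  have h_int2 : Integrable (u' * w) := by
    have : Integrable fun x : ℝ => -v * rexp (-(x - m)^2 / (2*v)) := (int_E hv m).const_mul (-v)
    exact this.bdd_mul (Continuous.aestronglyMeasurable (by continuity))
      (c := |a|) (Filter.Eventually.of_forall fun x => by
        rw [Real.norm_eq_abs, abs_mul]
        exact mul_le_of_le_one_right (abs_nonneg a) (Real.abs_cos_le_one _))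
  have hnorm : ∀ x : ℝ, ‖(u * w) x‖ ≤ v * rexp (-(x - m)^2 / (2*v)) := by
    intro x
    have h := Real.abs_sin_le_one (a*x+b)
    simp only [Pi.mul_apply, hu_def, hw_def, Real.norm_eq_abs, abs_mul, abs_neg,
      _root_.abs_of_pos hv, _root_.abs_of_nonneg (Real.exp_pos _).le]
    have hpos : (0:ℝ) ≤ v * rexp (-(x - m)^2/(2*v)) := by positivity
    calc |Real.sin (a*x+b)| * (v * rexp (-(x - m)^2/(2*v)))
        ≤ 1 * (v * rexp (-(x - m)^2/(2*v))) := mul_le_mul_of_nonneg_right h hpos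
      _ = v * rexp (-(x - m)^2/(2*v)) := one_mul _
  have hElim_top : Tendsto (fun x : ℝ => v * rexp (-(x - m)^2 / (2*v))) atTop (nhds 0) := by
    have := (tendsto_E_atTop hv m).const_mul v
    simpa using this
  have hElim_bot : Tendsto (fun x : ℝ => v * rexp (-(x - m)^2 / (2*v))) atBot (nhds 0) := by
    have := (tendsto_E_atBot hv m).const_mul v
    simpa using this
  have h_top : Tendsto (u * w) atTop (nhds 0) := squeeze_zero_norm hnorm hElim_top
  have h_bot : Tendsto (u * w) atBot (nhds 0) := squeeze_zero_norm hnorm hElim_bot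
  have key := integral_mul_deriv_eq_deriv_mul (fun x _ => hu x) (fun x _ => hw x) h_int1 h_int2 h_bot h_top
  have hrw : ∀ x : ℝ, u' x * w x = (-(a*v)) * (Real.cos (a*x+b) * rexp (-(x - m)^2/(2*v))) := by
    intro x; simp only [hu'_def, hw_def]; ring
  have hcos := (gauss_trig hv m a b).1
  have hsin := (gauss_trig hv m a b).2
  have key2 : (∫ x : ℝ, u x * w' x)
      = (a*v) * (Real.sqrt (2*π*v) * (rexp (-(a^2*v)/2) * Real.cos (a*m+b))) := by
    rw [key]
    simp_rw [hrw]
    rw [integral_const_mul, hcos]; ring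
  have hsplit : ∀ x : ℝ, x * Real.sin (a*x+b) * rexp (-(x - m)^2/(2*v))
      = u x * w' x + m * (Real.sin (a*x+b) * rexp (-(x - m)^2/(2*v))) := by
    intro x; simp only [hu_def, hw'_def]; ring
  calc (∫ x : ℝ, x * Real.sin (a*x+b) * rexp (-(x - m)^2/(2*v)))
      = ∫ x : ℝ, (u x * w' x + m * (Real.sin (a*x+b) * rexp (-(x - m)^2/(2*v)))) := by
        simp_rw [hsplit]
    _ = (∫ x : ℝ, u x * w' x) + m * ∫ x : ℝ, Real.sin (a*x+b) * rexp (-(x - m)^2/(2*v)) := by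
        have h_int1' : Integrable (fun x => u x * w' x) volume := h_int1
        rw [integral_add h_int1' ((int_sin_E hv m a b).const_mul m), integral_const_mul]
    _ = Real.sqrt (2*π*v) * (rexp (-(a^2*v)/2)
          * (m * Real.sin (a*m+b) + a*v*Real.cos (a*m+b))) := by
        rw [key2, hsin]; ring

end GaussHelpers

/-- sinc kernel, normalized by π -/
noncomputable def sincR (x : ℝ) : ℝ := if x = 0 then 1 / Real.pi else Real.sin x / (Real.pi * x)

/-- sine integral -/
noncomputable def SiR (x : ℝ) : ℝ := ∫ t in (0:ℝ)..x, Real.sin t / t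

/-- cumulative sinc -/
noncomputable def CsincR (x : ℝ) : ℝ := 1 / 2 + SiR x / Real.pi

private lemma inv_sin_bound (ω z : ℝ) : |ω⁻¹ * Real.sin (ω*z)| ≤ |z| := by
  rcases eq_or_ne ω 0 with hω | hω
  · simp [hω, abs_nonneg]
  · rw [abs_mul]
    calc |ω⁻¹| * |Real.sin (ω*z)| ≤ |ω⁻¹| * |ω*z| :=
          mul_le_mul_of_nonneg_left Real.abs_sin_le_abs (abs_nonneg _)
      _ = |z| := by
          rw [abs_mul, abs_inv, inv_mul_cancel_left₀ (abs_ne_zero.mpr hω)]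

private lemma ii_inv_sin (z : ℝ) (a b : ℝ) :
    IntervalIntegrable (fun ω : ℝ => ω⁻¹ * Real.sin (ω*z)) volume a b := by
  rw [intervalIntegrable_iff]
  have hmeas : Measurable fun ω : ℝ => ω⁻¹ * Real.sin (ω*z) :=
    (measurable_id.inv).mul (Real.continuous_sin.measurable.comp (measurable_id.mul_const z))
  have hfin : volume (Set.uIoc a b) < ⊤ := by rw [Set.uIoc]; exact measure_Ioc_lt_top
  refine Integrable.mono' (integrableOn_const (C := |z|) hfin.ne)
    (hmeas.aestronglyMeasurable.restrict)
    (Filter.Eventually.of_forall fun ω => ?_)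
  rw [Real.norm_eq_abs]
  exact inv_sin_bound ω z

private lemma claimA {h z : ℝ} (hh : 0 < h) :
    (∫ ω in (0:ℝ)..(1/h), ω⁻¹ * Real.sin (ω*z)) = SiR (z/h) := by
  rcases eq_or_ne z 0 with hz | hz
  · simp [hz, SiR]
  · have hcomp := intervalIntegral.integral_comp_mul_right (a := (0:ℝ)) (b := 1/h)
      (fun t => Real.sin t / t) hz
    have heq : ∀ ω : ℝ, ω⁻¹ * Real.sin (ω*z) = z * (Real.sin (ω*z) / (ω*z)) := by
      intro ω
      rcases eq_or_ne ω 0 with hω | hω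
      · simp [hω]
      · field_simp
    simp_rw [heq]
    rw [intervalIntegral.integral_const_mul, hcomp]
    simp only [zero_mul, one_div, smul_eq_mul]
    rw [SiR]
    have : h⁻¹ * z = z / h := by field_simp
    rw [this, ← mul_assoc, mul_inv_cancel₀ hz, one_mul]

private lemma claimB {h z : ℝ} (hh : 0 < h) :
    (∫ ω in (0:ℝ)..(1/h), Real.cos (ω*z)) = (Real.pi/h) * sincR (z/h) := by
  rcases eq_or_ne z 0 with hz | hz
  · simp [hz, sincR]
    field_simp
  · have hcomp := intervalIntegral.integral_comp_mul_right (a := (0:ℝ)) (b := 1/h)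
      Real.cos hz
    rw [hcomp]
    simp only [zero_mul, one_div, smul_eq_mul, integral_cos, Real.sin_zero, sub_zero]
    have hzh : z / h ≠ 0 := div_ne_zero hz (ne_of_gt hh)
    rw [sincR, if_neg hzh]
    have h2 : h⁻¹ * z = z/h := by field_simp
    rw [h2]
    have hπ : Real.pi ≠ 0 := Real.pi_ne_zero
    field_simp

private lemma pointwise_decomp {σ h : ℝ} (hσ : 0 < σ) (hh : 0 < h) (K C y : ℝ) :
    (y - K) * CsincR ((y - C) / (σ * h)) - (σ / h) * sincR ((y - C) / (σ * h))
      = (1/2) * (y - K) + (1/Real.pi) * ∫ ω in (0:ℝ)..(1/h),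
          ((y - K) * (ω⁻¹ * Real.sin (ω * ((y - C)/σ))) - σ * Real.cos (ω * ((y - C)/σ))) := by
  set z := (y - C)/σ with hz_def
  have hzz : (y - C) / (σ * h) = z / h := by rw [hz_def]; field_simp
  have hsub : (∫ ω in (0:ℝ)..(1/h),
        ((y - K) * (ω⁻¹ * Real.sin (ω * z)) - σ * Real.cos (ω * z)))
      = (y - K) * SiR (z/h) - σ * ((Real.pi/h) * sincR (z/h)) := by
    rw [intervalIntegral.integral_sub ((ii_inv_sin z 0 (1/h)).const_mul (y-K))
      ((Continuous.intervalIntegrable (by continuity) 0 (1/h)).const_mul σ),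
      intervalIntegral.integral_const_mul, intervalIntegral.integral_const_mul,
      claimA hh, claimB hh]
  rw [hzz, hsub, CsincR]
  have hπ : Real.pi ≠ 0 := Real.pi_ne_zero
  field_simp
  ring

private lemma integral_gaussian_pdf (μ : ℝ) (v : ℝ≥0) (hv : v ≠ 0) (f : ℝ → ℝ) :
    ∫ y, f y ∂(gaussianReal μ v) = ∫ y, f y * gaussianPDFReal μ v y := by
  rw [gaussianReal_of_var_ne_zero μ hv]
  have hrw : gaussianPDF μ v = fun x => ((Real.toNNReal (gaussianPDFReal μ v x) : ℝ≥0) : ℝ≥0∞) := rfl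
  rw [hrw, integral_withDensity_eq_integral_smul
    ((measurable_gaussianPDFReal μ v).real_toNNReal) f]
  congr 1; funext y
  rw [NNReal.smul_def, Real.coe_toNNReal _ (gaussianPDFReal_nonneg μ v y), smul_eq_mul, mul_comm]

/-- truncated frequency-domain representation of `E[Ψ_h(Y)]`. -/
theorem assure_mean_representation (μ K C σ h : ℝ) (hσ : 0 < σ) (hh : 0 < h) :
    (∫ y, ((y - K) * CsincR ((y - C) / (σ * h)) - (σ / h) * sincR ((y - C) / (σ * h)))
        ∂(gaussianReal μ ((σ ^ 2).toNNReal)))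
      = (1 / 2) * (μ - K) + ((μ - K) / Real.pi) *
          ∫ ω in (0:ℝ)..(1 / h),
            (if ω = 0 then (μ - C) / σ
              else ω⁻¹ * Real.exp (-ω ^ 2 / 2) * Real.sin (ω * (μ - C) / σ)) := by
  have hσ2 : (0:ℝ) < σ^2 := by positivity
  have hvnn0 : (σ^2).toNNReal ≠ 0 := by
    simp only [ne_eq, Real.toNNReal_eq_zero, not_le]
    exact hσ2
  have hcoe : (((σ^2).toNNReal) : ℝ) = σ^2 := Real.coe_toNNReal _ hσ2.le
  set E := fun y : ℝ => rexp (-(y-μ)^2/(2*σ^2)) with hE_def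
  set cE := (Real.sqrt (2*π*σ^2))⁻¹ with hcE_def
  have hsqrt_pos : 0 < Real.sqrt (2*π*σ^2) := Real.sqrt_pos.mpr (by positivity)
  have hcE_pos : 0 < cE := by rw [hcE_def]; positivity
  have hcEs : cE * Real.sqrt (2*π*σ^2) = 1 := by
    rw [hcE_def]; exact inv_mul_cancel₀ hsqrt_pos.ne'
  have hpdf : ∀ y, gaussianPDFReal μ (σ^2).toNNReal y = cE * E y := by
    intro y
    rw [gaussianPDFReal, hcoe, hE_def, hcE_def]
  have hEpos : ∀ y, 0 < E y := fun y => Real.exp_pos _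
  -- integrability of basics
  have intE : Integrable E := int_E hσ2 μ
  have intxE : Integrable (fun y => y * E y) := int_x_E hσ2 μ
  have intsqE : Integrable (fun y => (y-μ)^2 * E y) := int_sq_E hσ2 μ
  -- the kernel
  set F := fun (y ω : ℝ) => (y - K) * (ω⁻¹ * Real.sin (ω * ((y - C)/σ)))
      - σ * Real.cos (ω * ((y - C)/σ)) with hF_def
  set ν := volume.restrict (Set.Ioc (0:ℝ) (1/h)) with hν_def
  haveI : IsFiniteMeasure ν := by
    constructor
    rw [hν_def, Measure.restrict_apply_univ]
    exact measure_Ioc_lt_top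
  set c1 := ((μ-K)^2 + (μ-C)^2)/σ + σ with hc1_def
  set g2 := fun y : ℝ => (cE * (2/σ)) * ((y-μ)^2 * E y) + (cE * c1) * E y with hg2_def
  have intg2 : Integrable g2 := (intsqE.const_mul _).add (intE.const_mul _)
  have hbound : ∀ y ω : ℝ, ‖F y ω * (cE * E y)‖ ≤ g2 y := by
    intro y ω
    have hstep1 : |F y ω| ≤ |y - K| * |(y-C)/σ| + σ := by
      rw [hF_def]
      calc |(y - K) * (ω⁻¹ * Real.sin (ω * ((y - C)/σ))) - σ * Real.cos (ω * ((y - C)/σ))|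
          ≤ |(y - K) * (ω⁻¹ * Real.sin (ω * ((y - C)/σ)))| + |σ * Real.cos (ω * ((y - C)/σ))| :=
            abs_sub _ _
        _ ≤ |y - K| * |(y-C)/σ| + σ := by
            gcongr
            · rw [abs_mul]
              exact mul_le_mul_of_nonneg_left (inv_sin_bound ω ((y-C)/σ)) (abs_nonneg _)
            · rw [abs_mul, _root_.abs_of_pos hσ]
              exact mul_le_of_le_one_right hσ.le (Real.abs_cos_le_one _)
    have hstep2 : |y - K| * |(y-C)/σ| + σ ≤ (2/σ) * (y-μ)^2 + c1 := by
      have hP : |y - K| * |y - C| ≤ 2*(y-μ)^2 + (μ-K)^2 + (μ-C)^2 := by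
        nlinarith [sq_nonneg (|y-K| - |y-C|), sq_abs (y-K), sq_abs (y-C),
          sq_nonneg ((y-μ) - (μ-K)), sq_nonneg ((y-μ) - (μ-C)),
          sq_nonneg ((y-μ) + (μ-K)), sq_nonneg ((y-μ) + (μ-C)), abs_nonneg (y-K), abs_nonneg (y-C)]
      have h1 : |(y-C)/σ| = |y-C|/σ := by rw [abs_div, _root_.abs_of_pos hσ]
      rw [h1]
      have key : (|y-K| * (|y-C|/σ) + σ) * σ ≤ ((2/σ) * (y-μ)^2 + c1) * σ := by
        have e1 : (|y-K| * (|y-C|/σ) + σ) * σ = |y-K| * |y-C| + σ*σ := by field_simp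
        have e2 : ((2/σ) * (y-μ)^2 + c1) * σ = 2*(y-μ)^2 + ((μ-K)^2 + (μ-C)^2) + σ*σ := by
          rw [hc1_def]; field_simp; ring
        rw [e1, e2]; linarith [hP]
      exact (mul_le_mul_iff_left₀ hσ).mp key
    have hnn : (0:ℝ) ≤ cE * E y := by positivity
    calc ‖F y ω * (cE * E y)‖ = |F y ω| * (cE * E y) := by
          rw [Real.norm_eq_abs, abs_mul, _root_.abs_of_nonneg hnn]
      _ ≤ ((2/σ) * (y-μ)^2 + c1) * (cE * E y) := by
          apply mul_le_mul_of_nonneg_right _ hnn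
          exact le_trans hstep1 hstep2
      _ = g2 y := by rw [hg2_def]; ring
  -- measurability of the product kernel
  have hzmeas : Measurable fun p : ℝ × ℝ => p.2 * ((p.1 - C)/σ) :=
    measurable_snd.mul ((measurable_fst.sub_const C).div_const σ)
  have hGmeas0 : Measurable fun p : ℝ × ℝ => F p.1 p.2 * (cE * E p.1) := by
    apply Measurable.mul
    · apply Measurable.sub
      · exact (measurable_fst.sub_const K).mul
          (measurable_snd.inv.mul (Real.continuous_sin.measurable.comp hzmeas))
      · exact (Real.continuous_cos.measurable.comp hzmeas).const_mul σ
    · exact (Real.measurable_exp.comp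
        (((measurable_fst.sub_const μ).pow_const 2).neg.div_const (2*σ^2))).const_mul cE
  have hGmeas : AEStronglyMeasurable (fun p : ℝ × ℝ => F p.1 p.2 * (cE * E p.1))
      (volume.prod ν) := hGmeas0.aestronglyMeasurable
  -- integrability on the product
  have hG : Integrable (fun p : ℝ × ℝ => F p.1 p.2 * (cE * E p.1)) (volume.prod ν) := by
    rw [integrable_prod_iff hGmeas]
    constructor
    · refine Filter.Eventually.of_forall fun y => ?_
      refine Integrable.mono' (integrable_const (g2 y)) ?_
        (Filter.Eventually.of_forall fun ω => hbound y ω)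
      exact ((hGmeas0.comp (measurable_prodMk_left (m := borel ℝ))).aestronglyMeasurable)
    · refine Integrable.mono' ((intg2.const_mul ((ν Set.univ).toReal))) ?_
        (Filter.Eventually.of_forall fun y => ?_)
      · exact hGmeas.norm.integral_prod_right'
      · have h1 : ‖∫ ω, ‖F y ω * (cE * E y)‖ ∂ν‖ ≤ g2 y * (ν Set.univ).toReal := by
          apply norm_integral_le_of_norm_le_const
          refine Filter.Eventually.of_forall fun ω => ?_
          rw [norm_norm]
          exact hbound y ω
        calc ‖∫ ω, ‖F y ω * (cE * E y)‖ ∂ν‖ ≤ g2 y * (ν Set.univ).toReal := h1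
          _ = (ν Set.univ).toReal * g2 y := mul_comm _ _
  -- rewrite LHS as a Lebesgue integral against the density
  rw [integral_gaussian_pdf μ _ hvnn0]
  simp_rw [hpdf]
  have hptw : ∀ y : ℝ,
      ((y - K) * CsincR ((y - C) / (σ * h)) - σ / h * sincR ((y - C) / (σ * h))) * (cE * E y)
      = (1/2) * (y - K) * (cE * E y)
        + (1/Real.pi) * ((∫ ω in (0:ℝ)..(1/h), F y ω) * (cE * E y)) := by
    intro y
    rw [show (y - K) * CsincR ((y - C) / (σ * h)) - σ / h * sincR ((y - C) / (σ * h))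
        = (y - K) * CsincR ((y - C) / (σ * h)) - (σ / h) * sincR ((y - C) / (σ * h)) from rfl,
      pointwise_decomp hσ hh K C y]
    rw [hF_def]
    ring
  simp_rw [hptw]
  -- interval integral to set integral, and push the density inside
  have hIoc : ∀ y : ℝ, (∫ ω in (0:ℝ)..(1/h), F y ω) * (cE * E y)
      = ∫ ω, F y ω * (cE * E y) ∂ν := by
    intro y
    rw [intervalIntegral.integral_of_le (by positivity : (0:ℝ) ≤ 1/h), ← hν_def,
      ← integral_mul_const]
  simp_rw [hIoc]
  -- split the integral
  have int1 : Integrable (fun y => (1/2) * (y - K) * (cE * E y)) := by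
    have : (fun y : ℝ => (1/2) * (y - K) * (cE * E y))
        = fun y => (cE/2) * (y * E y) + (-(K*cE/2)) * E y := by
      funext y; ring
    rw [this]
    exact (intxE.const_mul _).add (intE.const_mul _)
  have int2 : Integrable (fun y => ∫ ω, F y ω * (cE * E y) ∂ν) := hG.integral_prod_left
  rw [integral_add int1 (int2.const_mul _), integral_const_mul]
  -- compute the first integral
  have hxE : (∫ y : ℝ, y * E y) = Real.sqrt (2*π*σ^2) * μ := by
    have h0 := gauss_xsin hσ2 μ 0 (π/2)
    simp only [zero_mul, zero_add, Real.sin_pi_div_two, Real.cos_pi_div_two, mul_one, mul_zero,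
      add_zero, ne_eq, OfNat.ofNat_ne_zero, not_false_eq_true, zero_pow, neg_zero, zero_div,
      Real.exp_zero, one_mul] at h0
    simp only [hE_def]
    exact h0
  have hE1 : (∫ y : ℝ, E y) = Real.sqrt (2*π*σ^2) := by
    have h0 := (gauss_trig hσ2 μ 0 0).1
    simp only [zero_mul, zero_add, Real.cos_zero, one_mul, ne_eq, OfNat.ofNat_ne_zero,
      not_false_eq_true, zero_pow, neg_zero, zero_div, Real.exp_zero, mul_one] at h0
    simp only [hE_def]
    exact h0
  have hT1 : (∫ y : ℝ, (1/2) * (y - K) * (cE * E y)) = (1/2) * (μ - K) := by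
    have hsplit : (fun y : ℝ => (1/2) * (y - K) * (cE * E y))
        = fun y => (cE/2) * (y * E y) + (-(K*cE/2)) * E y := by
      funext y; ring
    rw [hsplit, integral_add ((intxE.const_mul _)) ((intE.const_mul _)),
      integral_const_mul, integral_const_mul, hxE, hE1]
    linear_combination ((μ - K)/2) * hcEs
  rw [hT1]
  -- swap the order of integration
  have hswap := MeasureTheory.integral_integral_swap
    (f := fun y ω => F y ω * (cE * E y)) (μ := volume) (ν := ν) hG
  rw [hswap]
  -- evaluate the inner integral for each fixed ω ≠ 0
  have hinner : ∀ ω : ℝ, ω ≠ 0 →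
      (∫ y : ℝ, F y ω * (cE * E y))
        = (μ - K) * (ω⁻¹ * Real.exp (-ω^2/2) * Real.sin (ω * (μ - C) / σ)) := by
    intro ω hω
    set a := ω/σ with ha_def
    set b := -(ω*C/σ) with hb_def
    have hab : ∀ y : ℝ, ω * ((y - C)/σ) = a*y + b := by
      intro y; rw [ha_def, hb_def]; field_simp; ring
    have hshape : ∀ y : ℝ, F y ω * (cE * E y)
        = (cE * ω⁻¹) * (y * Real.sin (a*y+b) * E y)
          - (cE * K * ω⁻¹) * (Real.sin (a*y+b) * E y)
          - (cE * σ) * (Real.cos (a*y+b) * E y) := by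
      intro y
      rw [hF_def]
      simp only
      rw [hab y]
      ring
    simp_rw [hshape]
    have i1 : Integrable (fun y : ℝ => y * Real.sin (a*y+b) * E y) := by
      have : (fun y : ℝ => y * Real.sin (a*y+b) * E y)
          = fun y => Real.sin (a*y+b) * (y * E y) := by funext y; ring
      rw [this]
      have hcont : Continuous fun y : ℝ => Real.sin (a*y+b) :=
        Real.continuous_sin.comp ((continuous_const.mul continuous_id).add continuous_const)
      exact intxE.bdd_mul hcont.aestronglyMeasurable
        (c := 1) (Filter.Eventually.of_forall fun x => by rw [Real.norm_eq_abs]; exact Real.abs_sin_le_one _)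
    have i2 : Integrable (fun y : ℝ => Real.sin (a*y+b) * E y) := int_sin_E hσ2 μ a b
    have i3 : Integrable (fun y : ℝ => Real.cos (a*y+b) * E y) := int_cos_E hσ2 μ a b
    have j1 : Integrable (fun y : ℝ => (cE * ω⁻¹) * (y * Real.sin (a*y+b) * E y)
        - (cE * K * ω⁻¹) * (Real.sin (a*y+b) * E y)) volume :=
      (i1.const_mul (cE * ω⁻¹)).sub (i2.const_mul (cE * K * ω⁻¹))
    have j2 : Integrable (fun y : ℝ => (cE * σ) * (Real.cos (a*y+b) * E y)) volume :=
      i3.const_mul (cE * σ)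
    rw [integral_sub j1 j2, integral_sub (i1.const_mul (cE * ω⁻¹)) (i2.const_mul (cE * K * ω⁻¹)),
      integral_const_mul, integral_const_mul, integral_const_mul]
    rw [hE_def] at *
    rw [gauss_xsin hσ2 μ a b, (gauss_trig hσ2 μ a b).1, (gauss_trig hσ2 μ a b).2]
    have hav : a^2*σ^2 = ω^2 := by rw [ha_def]; field_simp
    have hamb : a*μ+b = ω * (μ - C) / σ := by rw [ha_def, hb_def]; field_simp; ring
    have has : a*σ^2 = ω*σ := by rw [ha_def]; field_simp
    rw [hav, hamb, has]
    set S := Real.sqrt (2*π*σ^2)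
    set e' := rexp (-ω^2/2)
    set st := Real.sin (ω * (μ - C) / σ)
    set ct := Real.cos (ω * (μ - C) / σ)
    have hexpand : cE * ω⁻¹ * (S * (e' * (μ * st + ω*σ*ct)))
          - cE * K * ω⁻¹ * (S * (e' * st)) - cE * σ * (S * (e' * ct))
        = (cE * S) * (ω⁻¹ * e' * ((μ - K) * st) + e' * ct * (σ * (ω⁻¹ * ω) - σ)) := by
      ring
    rw [hexpand, hcEs, inv_mul_cancel₀ hω]
    ring
  have hfinal : (∫ ω, (∫ y : ℝ, F y ω * (cE * E y)) ∂ν)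
      = (μ - K) * ∫ ω in (0:ℝ)..(1/h),
          (if ω = 0 then (μ - C) / σ
            else ω⁻¹ * Real.exp (-ω ^ 2 / 2) * Real.sin (ω * (μ - C) / σ)) := by
    rw [intervalIntegral.integral_of_le (by positivity : (0:ℝ) ≤ 1/h)]
    rw [hν_def]
    rw [← integral_const_mul]
    apply setIntegral_congr_fun measurableSet_Ioc
    intro ω hω
    have hω0 : ω ≠ 0 := ne_of_gt hω.1
    dsimp only
    rw [hinner ω hω0, if_neg hω0]
  rw [hfinal]
  ring
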